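/- Let A and Σ be n×n real positive semidefinite matrices, with Σ having unit diagonal. Then (2/π) Σ_{i,j} A_{ij} arcsin(Σ_{ij}) ≥ (2/π) Σ_{i,j} A_{ij} Σ_{ij}. Equivalently, the Gaussian-rounding value tr(A ∘ ((2/π)arcsin∘Σ)) is at least (2/π) tr(A ∘ Σ) where ∘ denotes entrywise operations. -/

import Mathlib

open Real

namespace NesterovAux

/-- Central binomial coefficient divided by `4^k`. -/
noncomputable def aa (k : ℕ) : ℝ := (Nat.centralBinom k : ℝ) / 4 ^ k

lemma aa_pos (k : ℕ) : 0 < aa k := by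
  apply div_pos
  · exact_mod_cast Nat.centralBinom_pos k
  · positivity

lemma aa_zero : aa 0 = 1 := by simp [aa, Nat.centralBinom]

lemma aa_rec (k : ℕ) : 2 * ((k : ℝ) + 1) * aa (k + 1) = (2 * k + 1) * aa k := by
  have h : ((k : ℝ) + 1) * (Nat.centralBinom (k + 1) : ℝ)
      = 2 * (2 * k + 1) * (Nat.centralBinom k : ℝ) := by
    exact_mod_cast congrArg (Nat.cast : ℕ → ℝ) (Nat.succ_mul_centralBinom_succ k)
  have h4 : (4 : ℝ) ^ (k + 1) = 4 * 4 ^ k := by ring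
  unfold aa
  rw [h4]
  field_simp
  nlinarith [h, pow_pos (show (0:ℝ) < 4 by norm_num) k]

lemma aa_le_one (k : ℕ) : aa k ≤ 1 := by
  induction k with
  | zero => simp [aa_zero]
  | succ k ih =>
    have hrec := aa_rec k
    have hpos := aa_pos k
    have hk : (0:ℝ) < 2 * ((k : ℝ) + 1) := by positivity
    nlinarith [aa_pos (k + 1)]

lemma summable_linear_geometric {r : ℝ} (h0 : 0 ≤ r) (h1 : r < 1) :
    Summable (fun k : ℕ => (2 * (k : ℝ) + 3) * r ^ k) := by
  have hr : ‖r‖ < 1 := by rwa [Real.norm_eq_abs, abs_of_nonneg h0]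
  have h2 := (summable_pow_mul_geometric_of_norm_lt_one 1 hr).mul_left 2
  have h3 := (summable_geometric_of_lt_one h0 h1).mul_left 3
  refine (h2.add h3).congr fun k => ?_
  simp [pow_one]
  ring

lemma summable_shift_geom {r : ℝ} (h0 : 0 ≤ r) (h1 : r < 1) :
    Summable (fun k : ℕ => (2 * (k : ℝ) + 3) * r ^ (k - 1)) := by
  rw [← summable_nat_add_iff 1]
  have := (summable_linear_geometric h0 h1).mul_left 2
  refine Summable.of_nonneg_of_le (fun k => by positivity) (fun k => ?_) this
  have he : (k + 1 - 1) = k := by norm_num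
  rw [he]
  push_cast
  nlinarith [pow_nonneg h0 k]

/-- Generic summability for series `∑ b k * y ^ m k` with `|b k| ≤ 2k+3` and `k ≤ m k + 1`. -/
lemma summable_aux {y : ℝ} (hy : |y| < 1) (b : ℕ → ℝ) (hb : ∀ k : ℕ, |b k| ≤ 2 * k + 3)
    (m : ℕ → ℕ) (hm : ∀ k, k ≤ m k + 1) : Summable (fun k => b k * y ^ m k) := by
  have h0 : (0:ℝ) ≤ |y| := abs_nonneg y
  refine Summable.of_norm ?_
  refine Summable.of_nonneg_of_le (fun k => norm_nonneg _)
    (fun k => ?_) (summable_shift_geom h0 hy)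
  rw [norm_mul, Real.norm_eq_abs, Real.norm_eq_abs, abs_pow]
  have h1 : |y| ^ m k ≤ |y| ^ (k - 1) := by
    apply pow_le_pow_of_le_one h0 hy.le
    have := hm k; omega
  have h2 : (0:ℝ) ≤ 2 * (k:ℝ) + 3 := by positivity
  calc |b k| * |y| ^ m k ≤ (2 * (k:ℝ) + 3) * |y| ^ (k - 1) :=
        mul_le_mul (hb k) h1 (by positivity) h2
    _ = (2 * (k : ℝ) + 3) * |y| ^ (k - 1) := rfl

/-- Termwise differentiation of the series `∑ b k * x ^ m k` for `|y| < 1`. -/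
lemma hasDerivAt_tsum_gen (b : ℕ → ℝ) (hb : ∀ k, |b k| ≤ 1) (m : ℕ → ℕ)
    (hm1 : ∀ k, k ≤ m k) (hm2 : ∀ k, m k ≤ 2 * k + 1) {y : ℝ} (hy : |y| < 1) :
    HasDerivAt (fun x => ∑' k, b k * x ^ m k)
      (∑' k, b k * ((m k : ℝ) * y ^ (m k - 1))) y := by
  set r : ℝ := (1 + |y|) / 2 with hr
  have h0y : (0:ℝ) ≤ |y| := abs_nonneg y
  have hr0 : 0 < r := by rw [hr]; linarith
  have hr1 : r < 1 := by rw [hr]; linarith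
  have hyr : |y| < r := by rw [hr]; linarith
  have hu : Summable (fun k : ℕ => (2 * (k:ℝ) + 3) * r ^ (k - 1)) :=
    summable_shift_geom hr0.le hr1
  refine hasDerivAt_tsum_of_isPreconnected hu isOpen_Ioo
    (convex_Ioo (-r) r).isPreconnected
    (fun k z _ => (hasDerivAt_pow (m k) z).const_mul (b k))
    (fun k z hz => ?_) (show (0:ℝ) ∈ Set.Ioo (-r) r from ⟨by linarith, hr0⟩)
    ?_ (show y ∈ Set.Ioo (-r) r from abs_lt.mp hyr)
  · -- bound on derivatives
    have hzr : |z| ≤ r := le_of_lt (abs_lt.mpr hz)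
    rw [norm_mul, norm_mul, Real.norm_eq_abs, Real.norm_eq_abs, Real.norm_eq_abs, abs_pow]
    have habs : |(m k : ℝ)| = (m k : ℝ) := abs_of_nonneg (by positivity)
    rw [habs]
    have h1 : |z| ^ (m k - 1) ≤ r ^ (m k - 1) := pow_le_pow_left₀ (abs_nonneg z) hzr _
    have h2 : r ^ (m k - 1) ≤ r ^ (k - 1) := by
      apply pow_le_pow_of_le_one hr0.le hr1.le
      have := hm1 k; omega
    have h3 : (m k : ℝ) ≤ 2 * (k:ℝ) + 3 := by
      have := hm2 k
      have : (m k : ℝ) ≤ 2 * (k:ℝ) + 1 := by exact_mod_cast this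
      linarith
    calc |b k| * ((m k : ℝ) * |z| ^ (m k - 1))
        ≤ 1 * ((2 * (k:ℝ) + 3) * r ^ (k - 1)) := by
          apply mul_le_mul (hb k) ?_ (by positivity) zero_le_one
          apply mul_le_mul h3 (h1.trans h2) (by positivity) (by positivity)
      _ = (2 * (k:ℝ) + 3) * r ^ (k - 1) := one_mul _
  · -- summability at 0
    apply summable_of_ne_finset_zero (s := {0})
    intro k hk
    simp only [Finset.mem_singleton] at hk
    have : m k ≠ 0 := by have := hm1 k; omega
    simp [zero_pow this]

lemma kcast_nonneg (k : ℕ) : (0:ℝ) ≤ (k:ℝ) := Nat.cast_nonneg k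

lemma aa_abs_le (k : ℕ) : |aa k| ≤ 2 * k + 3 := by
  rw [abs_of_pos (aa_pos k)]
  have := kcast_nonneg k
  linarith [aa_le_one k]

noncomputable def gg (y : ℝ) : ℝ := ∑' (k : ℕ), aa k * y ^ k
noncomputable def DD (y : ℝ) : ℝ := ∑' (k : ℕ), ((k : ℝ) + 1) * aa (k + 1) * y ^ k

lemma abs_coeff_D (k : ℕ) : |((k : ℝ) + 1) * aa (k + 1)| ≤ 2 * k + 3 := by
  rw [abs_mul, abs_of_pos (aa_pos (k+1)), abs_of_nonneg (by positivity : (0:ℝ) ≤ (k:ℝ)+1)]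
  nlinarith [aa_rec k, aa_pos k, aa_le_one k, aa_pos (k+1), kcast_nonneg k]

lemma summable_gg {y : ℝ} (hy : |y| < 1) : Summable (fun k => aa k * y ^ k) :=
  summable_aux hy aa aa_abs_le (fun k => k) (fun k => by show k ≤ k + 1; omega)

lemma summable_DD {y : ℝ} (hy : |y| < 1) :
    Summable (fun k : ℕ => ((k : ℝ) + 1) * aa (k + 1) * y ^ k) :=
  summable_aux hy _ abs_coeff_D (fun k => k) (fun k => by show k ≤ k + 1; omega)

lemma hasDerivAt_gg {y : ℝ} (hy : |y| < 1) : HasDerivAt gg (DD y) y := by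
  have h := hasDerivAt_tsum_gen aa
    (fun k => by rw [abs_of_pos (aa_pos k)]; exact aa_le_one k)
    (fun k => k) (fun k => le_refl k) (fun k => by show k ≤ 2 * k + 1; omega) hy
  have he : (∑' (k : ℕ), aa k * ((k : ℝ) * y ^ (k - 1))) = DD y := by
    have hs : Summable (fun k : ℕ => aa k * ((k : ℝ) * y ^ (k - 1))) := by
      have h2 := summable_aux hy (fun k : ℕ => aa k * (k:ℝ))
        (fun k => by
          rw [abs_mul, abs_of_pos (aa_pos k), abs_of_nonneg (kcast_nonneg k)]
          nlinarith [aa_le_one k, aa_pos k, kcast_nonneg k])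
        (fun k => k - 1) (fun k => by show k ≤ k - 1 + 1; omega)
      exact h2.congr fun k => by ring
    rw [Summable.tsum_eq_zero_add hs]
    simp only [Nat.cast_zero, zero_mul, mul_zero, zero_add]
    unfold DD
    apply tsum_congr
    intro k
    have : (k + 1 - 1) = k := rfl
    rw [this]
    push_cast
    ring
  rw [← he]
  exact h

lemma key_ode {y : ℝ} (hy : |y| < 1) : 2 * (1 - y) * DD y = gg y := by
  have hsum1 : Summable (fun k : ℕ => (2 * (k:ℝ) + 1) * aa k * y ^ k) := by
    refine summable_aux hy _ (fun k => ?_) (fun k => k) (fun k => by show k ≤ k + 1; omega)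
    rw [abs_mul, abs_of_pos (aa_pos k), abs_of_nonneg (by positivity : (0:ℝ) ≤ 2*(k:ℝ)+1)]
    nlinarith [aa_le_one k, aa_pos k, kcast_nonneg k]
  have hsum2 : Summable (fun k : ℕ => (2 * (k:ℝ) + 1) * aa k * y ^ (k + 1)) := by
    refine summable_aux hy _ (fun k => ?_) (fun k => k + 1) (fun k => by show k ≤ k + 1 + 1; omega)
    rw [abs_mul, abs_of_pos (aa_pos k), abs_of_nonneg (by positivity : (0:ℝ) ≤ 2*(k:ℝ)+1)]
    nlinarith [aa_le_one k, aa_pos k, kcast_nonneg k]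
  have hw1 : Summable (fun k : ℕ => (2 * ((k:ℝ) + 1) + 1) * aa (k + 1) * y ^ (k + 1)) := by
    refine summable_aux hy _ (fun k => ?_) (fun k => k + 1) (fun k => by show k ≤ k + 1 + 1; omega)
    rw [abs_mul, abs_of_pos (aa_pos (k+1)), abs_of_nonneg (by positivity : (0:ℝ) ≤ 2*((k:ℝ)+1)+1)]
    nlinarith [aa_le_one (k+1), aa_pos (k+1), kcast_nonneg k]
  have h2D : 2 * DD y = ∑' (k : ℕ), (2 * (k:ℝ) + 1) * aa k * y ^ k := by
    rw [DD, ← tsum_mul_left]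
    exact tsum_congr fun k => by linear_combination y ^ k * aa_rec k
  have h2yD : 2 * y * DD y = ∑' (k : ℕ), (2 * (k:ℝ) + 1) * aa k * y ^ (k + 1) := by
    rw [DD, ← tsum_mul_left]
    exact tsum_congr fun k => by linear_combination y ^ (k + 1) * aa_rec k
  have hsplit : ∑' (k : ℕ), (2 * (k:ℝ) + 1) * aa k * y ^ k
      = 1 + ∑' (k : ℕ), (2 * ((k:ℝ) + 1) + 1) * aa (k + 1) * y ^ (k + 1) := by
    rw [Summable.tsum_eq_zero_add hsum1]
    have h0 : (2 * ((0:ℕ):ℝ) + 1) * aa 0 * y ^ (0:ℕ) = 1 := by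
      simp [aa_zero]
    rw [h0]
    congr 1
    exact tsum_congr fun k => by push_cast; ring
  have hts : (∑' (k : ℕ), (2 * ((k:ℝ) + 1) + 1) * aa (k + 1) * y ^ (k + 1))
      - ∑' (k : ℕ), (2 * (k:ℝ) + 1) * aa k * y ^ (k + 1)
      = ∑' (k : ℕ), aa (k + 1) * y ^ (k + 1) := by
    rw [← Summable.tsum_sub hw1 hsum2]
    exact tsum_congr fun k => by linear_combination y ^ (k + 1) * aa_rec k
  have hgg : gg y = 1 + ∑' (k : ℕ), aa (k + 1) * y ^ (k + 1) := by
    rw [gg, Summable.tsum_eq_zero_add (summable_gg hy)]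
    simp [aa_zero]
  have hstep : 2 * (1 - y) * DD y = 2 * DD y - 2 * y * DD y := by ring
  rw [hstep, h2D, h2yD, hsplit, hgg]
  linarith [hts]

lemma gg_mul_sqrt {y : ℝ} (hy : |y| < 1) : gg y * Real.sqrt (1 - y) = 1 := by
  have key : ∀ z ∈ Set.Ioo (-1:ℝ) 1, HasDerivAt (fun w => gg w * Real.sqrt (1 - w)) 0 z := by
    intro z hz
    have hz1 : |z| < 1 := abs_lt.mpr ⟨hz.1, hz.2⟩
    have h1z : (0:ℝ) < 1 - z := by linarith [hz.2]
    have hs0 : Real.sqrt (1 - z) ≠ 0 := by positivity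
    have hsq : HasDerivAt (fun w : ℝ => Real.sqrt (1 - w)) (1 / (2 * Real.sqrt (1 - z)) * (-1)) z := by
      have hinner : HasDerivAt (fun w : ℝ => 1 - w) (-1) z := by
        simpa using (hasDerivAt_id z).const_sub 1
      exact (Real.hasDerivAt_sqrt h1z.ne').comp z hinner
    have hprod := (hasDerivAt_gg hz1).mul hsq
    refine hprod.congr_deriv ?_
    have hss : Real.sqrt (1 - z) * Real.sqrt (1 - z) = 1 - z := Real.mul_self_sqrt h1z.le
    have hode := key_ode hz1
    field_simp
    linear_combination 2 * DD z * hss + hode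
  have hconst : ∀ z ∈ Set.Ioo (-1:ℝ) 1, gg z * Real.sqrt (1 - z) = gg 0 * Real.sqrt (1 - 0) := by
    intro z hz
    apply Convex.is_const_of_fderivWithin_eq_zero (𝕜 := ℝ) (convex_Ioo (-1:ℝ) 1)
      (f := fun w => gg w * Real.sqrt (1 - w))
    · intro w hw
      exact ((key w hw).differentiableAt).differentiableWithinAt
    · intro w hw
      rw [fderivWithin_of_isOpen isOpen_Ioo hw]
      have := (key w hw).hasFDerivAt.fderiv
      rw [this]
      ext v
      simp
    · exact hz
    · exact ⟨by norm_num, by norm_num⟩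
  have h0 : gg 0 = 1 := by
    rw [gg]
    rw [tsum_eq_single 0 (fun k hk => by simp [zero_pow hk])]
    simp [aa_zero]
  have := hconst y (abs_lt.mp hy)
  rwa [h0, sub_zero, Real.sqrt_one, one_mul] at this

lemma gg_eq {y : ℝ} (hy : |y| < 1) : gg y = (Real.sqrt (1 - y))⁻¹ := by
  have h1y : (0:ℝ) < 1 - y := by linarith [(abs_lt.mp hy).2]
  have hs : Real.sqrt (1 - y) ≠ 0 := by positivity
  field_simp
  exact gg_mul_sqrt hy

/-- The Taylor coefficients of `arcsin`. -/
noncomputable def cc (k : ℕ) : ℝ := aa k / (2 * k + 1)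

lemma cc_pos (k : ℕ) : 0 < cc k := by
  have := kcast_nonneg k
  exact div_pos (aa_pos k) (by linarith)

lemma cc_le_one (k : ℕ) : cc k ≤ 1 := by
  have hk := kcast_nonneg k
  rw [cc, div_le_one (by linarith)]
  linarith [aa_le_one k]

lemma cc_abs_le_one (k : ℕ) : |cc k| ≤ 1 := by
  rw [abs_of_pos (cc_pos k)]; exact cc_le_one k

lemma cc_zero : cc 0 = 1 := by simp [cc, aa_zero]

lemma summable_cc {x : ℝ} (hx : |x| < 1) :
    Summable (fun k : ℕ => cc k * x ^ (2 * k + 1)) := by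
  refine summable_aux hx _ (fun k => ?_) (fun k => 2 * k + 1) (fun k => by show k ≤ 2 * k + 1 + 1; omega)
  have := kcast_nonneg k
  linarith [cc_abs_le_one k]

noncomputable def FF (x : ℝ) : ℝ := ∑' (k : ℕ), cc k * x ^ (2 * k + 1)

lemma hasDerivAt_FF {x : ℝ} (hx : |x| < 1) :
    HasDerivAt FF ((Real.sqrt (1 - x ^ 2))⁻¹) x := by
  have hx2 : |x ^ 2| < 1 := by
    rw [abs_pow, sq_abs]
    have h := abs_lt.mp hx
    nlinarith [h.1, h.2]
  have h := hasDerivAt_tsum_gen cc cc_abs_le_one (fun k => 2 * k + 1)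
    (fun k => by show k ≤ 2 * k + 1; omega) (fun k => le_refl _) hx
  have he : (∑' (k : ℕ), cc k * (((2 * k + 1 : ℕ) : ℝ) * x ^ (2 * k + 1 - 1)))
      = (Real.sqrt (1 - x ^ 2))⁻¹ := by
    rw [← gg_eq hx2, gg]
    apply tsum_congr
    intro k
    have h1 : 2 * k + 1 - 1 = 2 * k := rfl
    rw [h1, cc, pow_mul]
    have hk : ((2 * k + 1 : ℕ) : ℝ) = 2 * (k:ℝ) + 1 := by push_cast; ring
    rw [hk]
    have hne : (2 * (k:ℝ) + 1) ≠ 0 := by have := kcast_nonneg k; positivity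
    field_simp
  rw [← he]
  exact h

lemma FF_eq_arcsin {x : ℝ} (hx : |x| < 1) : FF x = arcsin x := by
  have key : ∀ z ∈ Set.Ioo (-1:ℝ) 1, HasDerivAt (fun w => FF w - arcsin w) 0 z := by
    intro z hz
    have hz1 : |z| < 1 := abs_lt.mpr ⟨hz.1, hz.2⟩
    have ha : HasDerivAt arcsin (1 / Real.sqrt (1 - z ^ 2)) z :=
      Real.hasDerivAt_arcsin (by linarith [hz.1]) (by linarith [hz.2])
    have := (hasDerivAt_FF hz1).sub ha
    refine this.congr_deriv ?_; simp [one_div]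
  have hconst : ∀ z ∈ Set.Ioo (-1:ℝ) 1, FF z - arcsin z = FF 0 - arcsin 0 := by
    intro z hz
    apply Convex.is_const_of_fderivWithin_eq_zero (𝕜 := ℝ) (convex_Ioo (-1:ℝ) 1)
      (f := fun w => FF w - arcsin w)
    · intro w hw
      exact ((key w hw).differentiableAt).differentiableWithinAt
    · intro w hw
      rw [fderivWithin_of_isOpen isOpen_Ioo hw]
      rw [(key w hw).hasFDerivAt.fderiv]
      ext v
      simp
    · exact hz
    · exact ⟨by norm_num, by norm_num⟩
  have h0 : FF 0 = 0 := by
    rw [FF]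
    have : ∀ k : ℕ, cc k * (0:ℝ) ^ (2 * k + 1) = 0 := fun k => by
      simp [zero_pow (by omega : 2 * k + 1 ≠ 0)]
    simp only [this, tsum_zero]
  have := hconst x (abs_lt.mp hx)
  rw [h0, Real.arcsin_zero, sub_zero] at this
  linarith [this]

lemma hasSum_arcsin {x : ℝ} (hx : |x| < 1) :
    HasSum (fun k : ℕ => cc k * x ^ (2 * k + 1)) (arcsin x) := by
  have := (summable_cc hx).hasSum
  rwa [show ∑' (k : ℕ), cc k * x ^ (2*k+1) = arcsin x from FF_eq_arcsin hx] at this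

variable {n : ℕ}

/-- Quadratic form positivity from `PosSemidef`, in explicit double-sum form. -/
lemma qf_nonneg {S : Matrix (Fin n) (Fin n) ℝ} (hS : S.PosSemidef) (x : Fin n → ℝ) :
    0 ≤ ∑ i, ∑ j, x i * x j * S i j := by
  have h := hS.dotProduct_mulVec_nonneg x
  simp only [star_trivial, dotProduct, Matrix.mulVec, Finset.mul_sum] at h
  calc (0:ℝ) ≤ ∑ i, ∑ j, x i * (S i j * x j) := h
    _ = ∑ i, ∑ j, x i * x j * S i j := by
        refine Finset.sum_congr rfl fun i _ => Finset.sum_congr rfl fun j _ => by ring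

/-- A PSD matrix decomposes entrywise through its square root. -/
lemma psd_decomp {A : Matrix (Fin n) (Fin n) ℝ} (hA : A.PosSemidef) :
    ∃ R : Matrix (Fin n) (Fin n) ℝ, ∀ i j, A i j = ∑ l, R l i * R l j := by
  open scoped MatrixOrder in
  obtain ⟨B, hB⟩ := CStarAlgebra.nonneg_iff_eq_star_mul_self.mp hA.nonneg
  refine ⟨B, fun i j => ?_⟩
  rw [hB]
  simp [Matrix.mul_apply, Matrix.star_eq_conjTranspose]

/-- Schur-product positivity step at the level of quadratic forms. -/
lemma schur_step {S : Matrix (Fin n) (Fin n) ℝ} (hS : S.PosSemidef)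
    (C : Matrix (Fin n) (Fin n) ℝ) (hC : ∀ x : Fin n → ℝ, 0 ≤ ∑ i, ∑ j, x i * x j * C i j)
    (x : Fin n → ℝ) : 0 ≤ ∑ i, ∑ j, x i * x j * (S i j * C i j) := by
  obtain ⟨R, hR⟩ := psd_decomp hS
  have key : ∑ i, ∑ j, x i * x j * (S i j * C i j)
      = ∑ l, ∑ i, ∑ j, (x i * R l i) * (x j * R l j) * C i j := by
    have h1 : ∀ i j : Fin n, x i * x j * (S i j * C i j)
        = ∑ l, (x i * R l i) * (x j * R l j) * C i j := by
      intro i j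
      rw [hR i j, Finset.sum_mul, Finset.mul_sum]
      exact Finset.sum_congr rfl fun l _ => by ring
    simp only [h1]
    exact (Finset.sum_congr rfl fun i _ => Finset.sum_comm).trans Finset.sum_comm
  rw [key]
  exact Finset.sum_nonneg fun l _ => hC (fun i => x i * R l i)

/-- Entrywise powers of a PSD matrix are PSD (at the quadratic-form level). -/
lemma pow_qf {S : Matrix (Fin n) (Fin n) ℝ} (hS : S.PosSemidef) (m : ℕ)
    (x : Fin n → ℝ) : 0 ≤ ∑ i, ∑ j, x i * x j * S i j ^ m := by
  induction m generalizing x with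
  | zero =>
    simp only [pow_zero, mul_one]
    rw [← Fintype.sum_mul_sum]
    exact mul_self_nonneg _
  | succ m ih =>
    have := schur_step hS (fun i j => S i j ^ m) ih x
    calc (0:ℝ) ≤ ∑ i, ∑ j, x i * x j * (S i j * S i j ^ m) := this
      _ = ∑ i, ∑ j, x i * x j * S i j ^ (m + 1) := by
          refine Finset.sum_congr rfl fun i _ => Finset.sum_congr rfl fun j _ => by ring

/-- Frobenius pairing of a PSD matrix with a "PSD-form" matrix is nonnegative. -/
lemma frob_nonneg {A : Matrix (Fin n) (Fin n) ℝ} (hA : A.PosSemidef)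
    (C : Matrix (Fin n) (Fin n) ℝ) (hC : ∀ x : Fin n → ℝ, 0 ≤ ∑ i, ∑ j, x i * x j * C i j) :
    0 ≤ ∑ i, ∑ j, A i j * C i j := by
  obtain ⟨R, hR⟩ := psd_decomp hA
  have key : ∑ i, ∑ j, A i j * C i j
      = ∑ l, ∑ i, ∑ j, (R l i) * (R l j) * C i j := by
    have h1 : ∀ i j : Fin n, A i j * C i j = ∑ l, (R l i) * (R l j) * C i j := by
      intro i j
      rw [hR i j, Finset.sum_mul]
    simp only [h1]
    exact (Finset.sum_congr rfl fun i _ => Finset.sum_comm).trans Finset.sum_comm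
  rw [key]
  exact Finset.sum_nonneg fun l _ => hC (R l)

/-- Entries of a PSD matrix with unit diagonal lie in `[-1, 1]`. -/
lemma abs_entry_le_one {S : Matrix (Fin n) (Fin n) ℝ} (hS : S.PosSemidef)
    (hdiag : ∀ i, S i i = 1) (i j : Fin n) : |S i j| ≤ 1 := by
  have hsym : ∀ a b, S a b = S b a := by
    intro a b
    have := hS.1.apply a b
    simpa using this.symm
  by_cases hij : i = j
  · subst hij; rw [hdiag i]; norm_num
  · have key : ∀ c : ℝ, 0 ≤ 2 + 2 * c * S i j + 2 * (c ^ 2 - 1) / 2 * 0 + (c ^ 2 - 1) := by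
      intro c
      have h := qf_nonneg hS (fun k => (if k = i then 1 else 0) + (if k = j then c else 0))
      have hexp : ∑ a, ∑ b, ((if a = i then (1:ℝ) else 0) + (if a = j then c else 0))
            * ((if b = i then (1:ℝ) else 0) + (if b = j then c else 0)) * S a b
          = S i i + c * S i j + c * S j i + c * c * S j j := by
        simp [add_mul, mul_add, ite_mul, mul_ite, one_mul, zero_mul, mul_zero,
          Finset.sum_add_distrib, Finset.sum_ite_eq, Finset.sum_ite_eq', hij, Ne.symm hij]
        ring
      rw [hexp] at h
      rw [hdiag i, hdiag j, hsym j i] at h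
      nlinarith [h]
    have h1 := key 1
    have h2 := key (-1)
    rw [abs_le]
    constructor <;> nlinarith [h1, h2]

variable {n : ℕ}

lemma summable_tail {x : ℝ} (hx : |x| < 1) :
    Summable (fun k : ℕ => cc (k + 1) * x ^ (2 * k + 3)) := by
  refine summable_aux hx _ (fun k => ?_) (fun k => 2 * k + 3)
    (fun k => by show k ≤ 2 * k + 3 + 1; omega)
  have := cc_abs_le_one (k + 1)
  have hk : (0:ℝ) ≤ (k:ℝ) := Nat.cast_nonneg k
  linarith

/-- For `|x| < 1`, `arcsin x - x` equals a series with nonnegative coefficients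
in odd powers of `x`. -/
lemma arcsin_sub_eq {x : ℝ} (hx : |x| < 1) :
    arcsin x - x = ∑' (k : ℕ), cc (k + 1) * x ^ (2 * k + 3) := by
  have h := hasSum_arcsin hx
  have hsum : Summable (fun k : ℕ => cc k * x ^ (2 * k + 1)) := h.summable
  have ht := h.tsum_eq
  rw [Summable.tsum_eq_zero_add hsum] at ht
  have h0 : cc 0 * x ^ (2 * 0 + 1) = x := by simp [cc_zero]
  rw [h0] at ht
  have hre : (∑' (k : ℕ), cc (k + 1) * x ^ (2 * (k + 1) + 1))
      = ∑' (k : ℕ), cc (k + 1) * x ^ (2 * k + 3) :=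
    tsum_congr fun k => by rw [show 2*(k+1)+1 = 2*k+3 from by omega]
  rw [hre] at ht
  linarith [ht]

/-- The key quadratic-form inequality for the entrywise `arcsin` of a scaled PSD matrix. -/
lemma arcsin_qf_scaled {S : Matrix (Fin n) (Fin n) ℝ} (hS : S.PosSemidef)
    (hdiag : ∀ i, S i i = 1) (x : Fin n → ℝ) {t : ℝ} (ht0 : 0 ≤ t) (ht1 : t < 1) :
    0 ≤ ∑ i, ∑ j, x i * x j * (arcsin (t * S i j) - t * S i j) := by
  have habs : ∀ i j, |t * S i j| < 1 := by
    intro i j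
    rw [abs_mul, abs_of_nonneg ht0]
    calc t * |S i j| ≤ t * 1 :=
          mul_le_mul_of_nonneg_left (abs_entry_le_one hS hdiag i j) ht0
      _ < 1 := by linarith
  set f : Fin n → Fin n → ℕ → ℝ :=
    fun i j k => x i * x j * cc (k + 1) * (t * S i j) ^ (2 * k + 3) with hf
  have hsummable : ∀ i j, Summable (f i j) := fun i j =>
    (((summable_tail (habs i j)).mul_left (x i * x j)).congr (fun k => by rw [hf]; ring))
  have hterm : ∀ i j, x i * x j * (arcsin (t * S i j) - t * S i j) = ∑' (k : ℕ), f i j k := by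
    intro i j
    rw [arcsin_sub_eq (habs i j), ← tsum_mul_left]
    exact tsum_congr fun k => by rw [hf]; ring
  calc ∑ i, ∑ j, x i * x j * (arcsin (t * S i j) - t * S i j)
      = ∑ i, ∑ j, ∑' (k : ℕ), f i j k :=
        Finset.sum_congr rfl fun i _ => Finset.sum_congr rfl fun j _ => hterm i j
    _ = ∑ i, ∑' (k : ℕ), ∑ j, f i j k :=
        Finset.sum_congr rfl fun i _ => (Summable.tsum_finsetSum fun j _ => hsummable i j).symm
    _ = ∑' (k : ℕ), ∑ i, ∑ j, f i j k :=
        (Summable.tsum_finsetSum fun i _ => summable_sum fun j _ => hsummable i j).symm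
    _ ≥ 0 := by
        apply tsum_nonneg
        intro k
        have hq := pow_qf hS (2 * k + 3) x
        have heq : ∑ i, ∑ j, f i j k
            = cc (k + 1) * t ^ (2 * k + 3) * ∑ i, ∑ j, x i * x j * S i j ^ (2 * k + 3) := by
          rw [Finset.mul_sum]
          refine Finset.sum_congr rfl fun i _ => ?_
          rw [Finset.mul_sum]
          refine Finset.sum_congr rfl fun j _ => by simp only [hf, mul_pow]; ring
        rw [heq]
        have hc := cc_pos (k + 1)
        positivity

/-- Endpoint case via continuity. -/
lemma arcsin_qf {S : Matrix (Fin n) (Fin n) ℝ} (hS : S.PosSemidef)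
    (hdiag : ∀ i, S i i = 1) (x : Fin n → ℝ) :
    0 ≤ ∑ i, ∑ j, x i * x j * (arcsin (S i j) - S i j) := by
  set φ : ℝ → ℝ := fun t => ∑ i, ∑ j, x i * x j * (arcsin (t * S i j) - t * S i j) with hφ
  have hcont : Continuous φ := by
    apply continuous_finset_sum
    intro i _
    apply continuous_finset_sum
    intro j _
    exact continuous_const.mul ((Real.continuous_arcsin.comp
      (continuous_id.mul continuous_const)).sub (continuous_id.mul continuous_const))
  have hlim : Filter.Tendsto φ (nhdsWithin 1 (Set.Iio 1)) (nhds (φ 1)) :=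
    (hcont.tendsto 1).mono_left nhdsWithin_le_nhds
  have hev : ∀ᶠ t in nhdsWithin 1 (Set.Iio 1), 0 ≤ φ t := by
    filter_upwards [Ioo_mem_nhdsLT_of_mem (by constructor <;> norm_num :
      (1:ℝ) ∈ Set.Ioc 0 1)] with t ht
    exact arcsin_qf_scaled hS hdiag x ht.1.le ht.2
  have h1 : 0 ≤ φ 1 := ge_of_tendsto hlim hev
  simpa [hφ] using h1

/-- Nesterov's `2/π` theorem core inequality. -/
lemma main_core {A S : Matrix (Fin n) (Fin n) ℝ}
    (hA : A.PosSemidef) (hS : S.PosSemidef) (hdiag : ∀ i, S i i = 1) :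
    ∑ i, ∑ j, A i j * S i j ≤ ∑ i, ∑ j, A i j * arcsin (S i j) := by
  have h := frob_nonneg hA (fun i j => arcsin (S i j) - S i j) (arcsin_qf hS hdiag)
  have hsplit : ∑ i, ∑ j, A i j * (arcsin (S i j) - S i j)
      = (∑ i, ∑ j, A i j * arcsin (S i j)) - ∑ i, ∑ j, A i j * S i j := by
    rw [← Finset.sum_sub_distrib]
    refine Finset.sum_congr rfl fun i _ => ?_
    rw [← Finset.sum_sub_distrib]
    exact Finset.sum_congr rfl fun j _ => by ring
  rw [hsplit] at h
  linarith

end NesterovAux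

open Real

/-- Nesterov's `2/π` theorem: if `A` and `Σ` are PSD and `Σ` has unit diagonal, then
`(2/π) ∑ A i j * arcsin (Σ i j) ≥ (2/π) ∑ A i j * Σ i j`. -/
theorem stmt_8 (n : ℕ) (A S : Matrix (Fin n) (Fin n) ℝ)
    (hA : A.PosSemidef) (hS : S.PosSemidef) (hdiag : ∀ i, S i i = 1) :
    (2 / π) * ∑ i, ∑ j, A i j * S i j ≤
      (2 / π) * ∑ i, ∑ j, A i j * arcsin (S i j) := by
  have h := NesterovAux.main_core hA hS hdiag
  have hπ : (0:ℝ) ≤ 2 / π := by positivity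
  exact mul_le_mul_of_nonneg_left h hπ
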